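/- Let K be a complete algebraic lattice and let L be a nonempty subset of K closed under nonempty suprema and infima computed in K, regarded as a complete lattice with the induced order. Then the cardinality of the set of compact elements of L is at most the cardinality of the set of compact elements of K. -/

import Mathlib

namespace CompleteLattice

/-- An element `k` is compact if any set with supremum above `k` has a finite subset with
supremum above `k` (the definition of the older Mathlib, restored here). -/
def IsCompactElement {α : Type*} [CompleteLattice α] (k : α) :=
  ∀ s : Set α, k ≤ sSup s → ∃ t : Finset α, ↑t ⊆ s ∧ k ≤ t.sup id

end CompleteLattice

/-- Auxiliary lemma: if `M` is a complete lattice order-embedded in a complete algebraic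
lattice `K` such that the range of the embedding is closed under nonempty infima of `K`,
then `M` has at most as many compact elements as `K`. -/
theorem aux_card_compact_le {K : Type u} {M : Type u} [CompleteLattice K] [CompleteLattice M]
    (halgK : ∀ x : K, sSup {c : K | CompleteLattice.IsCompactElement c ∧ c ≤ x} = x)
    (e : M → K)
    (hord : ∀ a b : M, a ≤ b ↔ e a ≤ e b)
    (hInf : ∀ S : Set K, S ⊆ Set.range e → S.Nonempty → sInf S ∈ Set.range e) :
    Cardinal.mk {a : M // CompleteLattice.IsCompactElement a} ≤
      Cardinal.mk {x : K // CompleteLattice.IsCompactElement x} := by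
  classical
  have einj : Function.Injective e := fun a b h =>
    le_antisymm ((hord a b).mpr h.le) ((hord b a).mpr h.ge)
  set cl : K → K := fun k => sInf {x | x ∈ Set.range e ∧ k ≤ x} with hcl
  have hclmem : ∀ k : K, (∃ a : M, k ≤ e a) → cl k ∈ Set.range e := by
    rintro k ⟨a, hka⟩
    exact hInf _ (fun x hx => hx.1) ⟨e a, ⟨a, rfl⟩, hka⟩
  have hlecls : ∀ k, k ≤ cl k := fun k => le_sInf (fun x hx => hx.2)
  have hclle : ∀ (k : K) (a : M), k ≤ e a → cl k ≤ e a :=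
    fun k a hka => sInf_le ⟨⟨a, rfl⟩, hka⟩
  have hclmono : ∀ k k', k ≤ k' → cl k ≤ cl k' := fun k k' h =>
    le_sInf (fun x hx => sInf_le ⟨hx.1, h.trans hx.2⟩)
  have key : ∀ a : M, CompleteLattice.IsCompactElement a →
      ∃ c : K, CompleteLattice.IsCompactElement c ∧ cl c = e a := by
    intro a ha
    set A : Set K := {c | CompleteLattice.IsCompactElement c ∧ c ≤ e a} with hA
    have hSupA : sSup A = e a := halgK _
    have hclA : ∀ c ∈ A, cl c ∈ Set.range e := fun c hc => hclmem c ⟨a, hc.2⟩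
    set S : Set M := {x | ∃ c ∈ A, e x = cl c} with hS
    have haS : a ≤ sSup S := by
      rw [hord]
      calc e a = sSup A := hSupA.symm
        _ ≤ e (sSup S) := by
            refine sSup_le (fun c hc => ?_)
            obtain ⟨x, hx⟩ := hclA c hc
            have hxS : x ∈ S := ⟨c, hc, hx⟩
            calc c ≤ cl c := hlecls c
              _ = e x := hx.symm
              _ ≤ e (sSup S) := (hord _ _).mp (le_sSup hxS)
    obtain ⟨t, htS, hat⟩ := ha S haS
    set g : M → K := fun x => if h : x ∈ S then h.choose else ⊥ with hg
    have hgspec : ∀ x ∈ t, g x ∈ A ∧ e x = cl (g x) := by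
      intro x hx
      have hxS : x ∈ S := htS hx
      simp only [hg, dif_pos hxS]
      exact hxS.choose_spec
    set c : K := t.sup g with hc
    have hcompact : CompleteLattice.IsCompactElement c :=
      (CompleteLattice.isCompactElement_iff_exists_le_sSup_of_le_sSup K _).mp
        (CompleteLattice.isCompactElement_finsetSup t (fun x hx =>
          (CompleteLattice.isCompactElement_iff_exists_le_sSup_of_le_sSup K _).mpr (hgspec x hx).1.1))
    have hcla : c ≤ e a := Finset.sup_le (fun x hx => (hgspec x hx).1.2)
    refine ⟨c, hcompact, le_antisymm (hclle c a hcla) ?_⟩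
    obtain ⟨y, hy⟩ := hclmem c ⟨a, hcla⟩
    have hty : t.sup id ≤ y := by
      refine Finset.sup_le (fun x hx => ?_)
      rw [hord, hy, id, (hgspec x hx).2]
      exact hclmono _ _ (Finset.le_sup hx)
    calc e a ≤ e y := (hord _ _).mp (hat.trans hty)
      _ = cl c := hy
  choose f hf1 hf2 using fun a : {a : M // CompleteLattice.IsCompactElement a} => key a.1 a.2
  refine Cardinal.mk_le_of_injective (f := fun a => ⟨f a, hf1 a⟩) ?_
  intro a b hab
  have h1 : f a = f b := congrArg Subtype.val hab
  have h2 : e a.1 = e b.1 := by rw [← hf2 a, ← hf2 b, h1]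
  exact Subtype.ext (einj h2)

/-- if `L` is a nonempty subset of a complete algebraic lattice `K` closed under
nonempty suprema and infima computed in `K`, regarded as a complete lattice with the induced
order, then `L` has at most as many compact elements as `K`. -/
theorem closedSublattice_card_compact_le {K : Type u} [CompleteLattice K]
    (halgK : ∀ x : K, sSup {c : K | CompleteLattice.IsCompactElement c ∧ c ≤ x} = x)
    (L : Set K) (hne : L.Nonempty)
    (hSup : ∀ S : Set K, S ⊆ L → S.Nonempty → sSup S ∈ L)
    (hInf : ∀ S : Set K, S ⊆ L → S.Nonempty → sInf S ∈ L)
    (inst : CompleteLattice ↥L)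
    (hord : ∀ a b : ↥L, inst.le a b ↔ (a : K) ≤ (b : K)) :
    Cardinal.mk {a : ↥L // @CompleteLattice.IsCompactElement ↥L inst a} ≤
      Cardinal.mk {x : K // CompleteLattice.IsCompactElement x} := by
  letI := inst
  have hInf' : ∀ S : Set K, S ⊆ Set.range ((↑) : ↥L → K) → S.Nonempty →
      sInf S ∈ Set.range ((↑) : ↥L → K) := by
    simpa [Subtype.range_coe] using hInf
  exact aux_card_compact_le halgK ((↑) : ↥L → K) hord hInf'
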